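/- Split property for inquisitive disjunction: if Γ is a set of truth-conditional formulas of L and Γ ⊨ φ⩾ψ in InqI, then Γ ⊨ φ or Γ ⊨ ψ. -/

import Mathlib

/-- Formulas of the language L: atoms, ⊥, ∧, ∨, →, and inquisitive disjunction ⩾. -/
inductive Formula (P : Type) : Type
  | atom : P → Formula P
  | bot  : Formula P
  | and  : Formula P → Formula P → Formula P
  | or   : Formula P → Formula P → Formula P
  | impl : Formula P → Formula P → Formula P
  | iorr : Formula P → Formula P → Formula P

namespace Formula

/-- Negation ¬φ := φ → ⊥. -/
def neg {P : Type} (φ : Formula P) : Formula P := Formula.impl φ Formula.bot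

/-- Polar question ?φ := φ ⩾ ¬φ. -/
def question {P : Type} (φ : Formula P) : Formula P := Formula.iorr φ φ.neg

/-- A standard formula contains no occurrence of inquisitive disjunction ⩾. -/
def standard {P : Type} : Formula P → Prop
  | atom _ => True
  | bot => True
  | and φ ψ => φ.standard ∧ ψ.standard
  | or φ ψ => φ.standard ∧ ψ.standard
  | impl φ ψ => φ.standard ∧ ψ.standard
  | iorr _ _ => False

end Formula

/-- An intuitionistic Kripke model: a partially ordered set of worlds with a
persistent valuation. -/
structure KripkeModel (P : Type) where
  W : Type
  R : W → W → Prop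
  refl : ∀ w, R w w
  antisymm : ∀ w v, R w v → R v w → w = v
  trans : ∀ w v u, R w v → R v u → R w u
  V : W → P → Prop
  persistent : ∀ w v p, R w v → V w p → V v p

/-- R[t], the up-set generated by a team t. -/
def KripkeModel.upset {P : Type} (M : KripkeModel P) (t : Set M.W) : Set M.W :=
  {v | ∃ w ∈ t, M.R w v}

/-- The support relation M,t ⊨ φ between teams and formulas. -/
def support {P : Type} (M : KripkeModel P) : Formula P → Set M.W → Prop
  | .atom p, t => ∀ w ∈ t, M.V w p
  | .bot, t => t = ∅
  | .and φ ψ, t => support M φ t ∧ support M ψ t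
  | .or φ ψ, t => ∃ t₁ t₂, t = t₁ ∪ t₂ ∧ support M φ t₁ ∧ support M ψ t₂
  | .impl φ ψ, t => ∀ t', t' ⊆ M.upset t → support M φ t' → support M ψ t'
  | .iorr φ ψ, t => support M φ t ∨ support M ψ t

/-- Truth at a world: M,w ⊨ φ iff M,{w} ⊨ φ. -/
def truth {P : Type} (M : KripkeModel P) (w : M.W) (φ : Formula P) : Prop :=
  support M φ {w}

/-- A formula is truth-conditional if support at a team amounts to truth at each world. -/
def truthConditional {P : Type} (φ : Formula P) : Prop :=
  ∀ (M : KripkeModel P) (t : Set M.W), support M φ t ↔ ∀ w ∈ t, truth M w φ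

/-- The partial truth-value function: `tvalIs M w φ b` says T(w,φ) is defined with value b
(b = true for value 1, i.e. M,w ⊨ φ; b = false for value 0, i.e. M,w ⊨ ¬φ). -/
def tvalIs {P : Type} (M : KripkeModel P) (w : M.W) (φ : Formula P) : Bool → Prop
  | true => truth M w φ
  | false => truth M w φ.neg

section Aux

variable {P : Type}

/-- Persistency / downward closure of support. -/
lemma support_mono {M : KripkeModel P} (φ : Formula P) :
    ∀ {t s : Set M.W}, s ⊆ t → support M φ t → support M φ s := by
  induction φ with
  | atom p =>
    intro t s hs hφ w hw; exact hφ w (hs hw)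
  | bot =>
    intro t s hs hφ
    simp only [support] at *
    exact Set.eq_empty_of_subset_empty (hφ ▸ hs)
  | and φ ψ ihφ ihψ =>
    intro t s hs hφ
    exact ⟨ihφ hs hφ.1, ihψ hs hφ.2⟩
  | or φ ψ ihφ ihψ =>
    intro t s hs hφ
    obtain ⟨t₁, t₂, rfl, h₁, h₂⟩ := hφ
    refine ⟨s ∩ t₁, s ∩ t₂, ?_, ihφ Set.inter_subset_right h₁,
      ihψ Set.inter_subset_right h₂⟩
    rw [← Set.inter_union_distrib_left]
    exact (Set.inter_eq_left.mpr hs).symm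
  | impl φ ψ ihφ ihψ =>
    intro t s hs hφ t' ht' hφ'
    refine hφ t' (fun v hv => ?_) hφ'
    obtain ⟨w, hw, hR⟩ := ht' hv
    exact ⟨w, hs hw, hR⟩
  | iorr φ ψ ihφ ihψ =>
    intro t s hs hφ
    exact hφ.imp (ihφ hs) (ihψ hs)

/-- An embedding of one Kripke model into another with upward-closed image. -/
structure KEmb (M N : KripkeModel P) where
  f : M.W → N.W
  R_iff : ∀ a b, N.R (f a) (f b) ↔ M.R a b
  closed : ∀ a v, N.R (f a) v → ∃ b, f b = v
  V_iff : ∀ a p, N.V (f a) p ↔ M.V a p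

lemma KEmb.upset_image {M N : KripkeModel P} (e : KEmb M N) (t : Set M.W) :
    N.upset (e.f '' t) = e.f '' (M.upset t) := by
  ext v
  constructor
  · rintro ⟨w, ⟨a, ha, rfl⟩, hR⟩
    obtain ⟨b, rfl⟩ := e.closed a v hR
    exact ⟨b, ⟨a, ha, (e.R_iff a b).mp hR⟩, rfl⟩
  · rintro ⟨b, ⟨a, ha, hR⟩, rfl⟩
    exact ⟨e.f a, ⟨a, ha, rfl⟩, (e.R_iff a b).mpr hR⟩

lemma KEmb.support_image {M N : KripkeModel P} (e : KEmb M N) (φ : Formula P) :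
    ∀ (t : Set M.W), support N φ (e.f '' t) ↔ support M φ t := by
  induction φ with
  | atom p =>
    intro t
    constructor
    · intro h w hw; exact (e.V_iff w p).mp (h _ ⟨w, hw, rfl⟩)
    · rintro h v ⟨w, hw, rfl⟩; exact (e.V_iff w p).mpr (h w hw)
  | bot =>
    intro t
    simp only [support, Set.image_eq_empty]
  | and φ ψ ihφ ihψ =>
    intro t
    exact and_congr (ihφ t) (ihψ t)
  | or φ ψ ihφ ihψ =>
    intro t
    constructor
    · rintro ⟨s₁, s₂, hu, h₁, h₂⟩
      refine ⟨{a ∈ t | e.f a ∈ s₁}, {a ∈ t | e.f a ∈ s₂}, ?_, ?_, ?_⟩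
      · ext a
        constructor
        · intro ha
          have : e.f a ∈ s₁ ∪ s₂ := hu ▸ ⟨a, ha, rfl⟩
          exact this.imp (fun h => ⟨ha, h⟩) (fun h => ⟨ha, h⟩)
        · rintro (⟨ha, _⟩ | ⟨ha, _⟩) <;> exact ha
      · refine (ihφ _).mp (support_mono φ ?_ h₁)
        rintro v ⟨a, ⟨_, ha⟩, rfl⟩; exact ha
      · refine (ihψ _).mp (support_mono ψ ?_ h₂)
        rintro v ⟨a, ⟨_, ha⟩, rfl⟩; exact ha
    · rintro ⟨t₁, t₂, rfl, h₁, h₂⟩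
      exact ⟨e.f '' t₁, e.f '' t₂, (Set.image_union _ _ _), (ihφ t₁).mpr h₁,
        (ihψ t₂).mpr h₂⟩
  | impl φ ψ ihφ ihψ =>
    intro t
    constructor
    · intro h s' hs' hφ'
      have := h (e.f '' s') (by rw [e.upset_image]; exact Set.image_mono hs')
        ((ihφ s').mpr hφ')
      exact (ihψ s').mp this
    · intro h s' hs' hφ'
      rw [e.upset_image] at hs'
      set u : Set M.W := {a ∈ M.upset t | e.f a ∈ s'} with hu
      have hs'u : s' = e.f '' u := by
        ext v
        constructor
        · intro hv
          obtain ⟨a, ha, rfl⟩ := hs' hv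
          exact ⟨a, ⟨ha, hv⟩, rfl⟩
        · rintro ⟨a, ⟨_, ha⟩, rfl⟩; exact ha
      rw [hs'u] at hφ' ⊢
      refine (ihψ u).mpr (h u (fun a ha => ha.1) ((ihφ u).mp hφ'))
  | iorr φ ψ ihφ ihψ =>
    intro t
    exact or_congr (ihφ t) (ihψ t)

/-- Disjoint union of two Kripke models. -/
def sumModel (M₁ M₂ : KripkeModel P) : KripkeModel P where
  W := M₁.W ⊕ M₂.W
  R x y := match x, y with
    | .inl a, .inl b => M₁.R a b
    | .inr a, .inr b => M₂.R a b
    | _, _ => False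
  refl x := by cases x <;> simp [M₁.refl, M₂.refl]
  antisymm x y := by
    cases x <;> cases y <;> simp <;> intro h₁ h₂
    · exact M₁.antisymm _ _ h₁ h₂
    · exact M₂.antisymm _ _ h₁ h₂
  trans x y z := by
    cases x <;> cases y <;> cases z <;> simp
    · exact M₁.trans _ _ _
    · exact M₂.trans _ _ _
  V x p := match x with
    | .inl a => M₁.V a p
    | .inr a => M₂.V a p
  persistent x y p := by
    cases x <;> cases y <;> simp
    · exact M₁.persistent _ _ p
    · exact M₂.persistent _ _ p

def sumEmbL (M₁ M₂ : KripkeModel P) : KEmb M₁ (sumModel M₁ M₂) where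
  f := Sum.inl
  R_iff a b := Iff.rfl
  closed a v h := by
    cases v with
    | inl b => exact ⟨b, rfl⟩
    | inr b => exact absurd h (by simp [sumModel])
  V_iff a p := Iff.rfl

def sumEmbR (M₁ M₂ : KripkeModel P) : KEmb M₂ (sumModel M₁ M₂) where
  f := Sum.inr
  R_iff a b := Iff.rfl
  closed a v h := by
    cases v with
    | inl b => exact absurd h (by simp [sumModel])
    | inr b => exact ⟨b, rfl⟩
  V_iff a p := Iff.rfl

end Aux

/-- split property for inquisitive disjunction: if Γ consists of
truth-conditional formulas and Γ ⊨ φ ⩾ ψ, then Γ ⊨ φ or Γ ⊨ ψ. -/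
theorem split_property {P : Type} (Γ : Set (Formula P))
    (hΓ : ∀ γ ∈ Γ, truthConditional γ) (φ ψ : Formula P)
    (h : ∀ (M : KripkeModel P) (t : Set M.W),
        (∀ γ ∈ Γ, support M γ t) → support M (Formula.iorr φ ψ) t) :
    (∀ (M : KripkeModel P) (t : Set M.W),
        (∀ γ ∈ Γ, support M γ t) → support M φ t) ∨
    (∀ (M : KripkeModel P) (t : Set M.W),
        (∀ γ ∈ Γ, support M γ t) → support M ψ t) := by
  by_contra hc
  push_neg at hc
  obtain ⟨⟨M₁, t₁, hΓ₁, hφ₁⟩, ⟨M₂, t₂, hΓ₂, hψ₂⟩⟩ := hc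
  set N := sumModel M₁ M₂ with hN
  set e₁ := sumEmbL M₁ M₂
  set e₂ := sumEmbR M₁ M₂
  set T : Set N.W := (e₁.f '' t₁) ∪ (e₂.f '' t₂) with hT
  have hsup : ∀ γ ∈ Γ, support N γ T := by
    intro γ hγ
    refine (hΓ γ hγ N T).mpr ?_
    rintro w (⟨a, ha, rfl⟩ | ⟨a, ha, rfl⟩)
    · have : truth M₁ a γ := (hΓ γ hγ M₁ t₁).mp (hΓ₁ γ hγ) a ha
      have := (e₁.support_image γ {a}).mpr this
      simpa [truth, Set.image_singleton] using this
    · have : truth M₂ a γ := (hΓ γ hγ M₂ t₂).mp (hΓ₂ γ hγ) a ha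
      have := (e₂.support_image γ {a}).mpr this
      simpa [truth, Set.image_singleton] using this
  rcases h N T hsup with hφ | hψ
  · exact hφ₁ ((e₁.support_image φ t₁).mp
      (support_mono φ Set.subset_union_left hφ))
  · exact hψ₂ ((e₂.support_image ψ t₂).mp
      (support_mono ψ Set.subset_union_right hψ))
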